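/- Let m, n ∈ ℕ and h > 0 with C₁ ≤ mh ≤ C₂ for fixed constants 0 < C₁ ≤ C₂. Then there is a constant C depending only on C₁, C₂ such that for all x ∈ ℝ, ∑_{0 ≤ l ≤ 2π/h} K_m(x − lh) ≤ C·m, where K_m is the Fejér kernel of order m. -/

import Mathlib

open scoped BigOperators
open Real Classical

/-- The Fejér kernel `K_m(x) = sin²((m+1)x/2)/((m+1) sin²(x/2))`, with value `m+1` at the
multiples of `2π`. -/
noncomputable def fejerK (m : ℕ) (x : ℝ) : ℝ :=
  if ∃ k : ℤ, x = 2 * π * k then m + 1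
  else Real.sin ((m + 1) * x / 2) ^ 2 / ((m + 1) * Real.sin (x / 2) ^ 2)

lemma aux_abs_sin_nat_mul_le (n : ℕ) (t : ℝ) : |Real.sin (n * t)| ≤ n * |Real.sin t| := by
  induction n with
  | zero => simp
  | succ n ih =>
    have e : ((n : ℝ) + 1) * t = n * t + t := by ring
    rw [Nat.cast_succ, e, Real.sin_add]
    calc |Real.sin (n*t) * Real.cos t + Real.cos (n*t) * Real.sin t|
        ≤ |Real.sin (n*t) * Real.cos t| + |Real.cos (n*t) * Real.sin t| := abs_add_le _ _
      _ = |Real.sin (n*t)| * |Real.cos t| + |Real.cos (n*t)| * |Real.sin t| := by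
          rw [abs_mul, abs_mul]
      _ ≤ |Real.sin (n*t)| + |Real.sin t| := by
          have h1 : |Real.sin (n*t)| * |Real.cos t| ≤ |Real.sin (n*t)| := by
            have := Real.abs_cos_le_one t
            nlinarith [abs_nonneg (Real.sin (n*t))]
          have h2 : |Real.cos (n*t)| * |Real.sin t| ≤ |Real.sin t| := by
            have := Real.abs_cos_le_one ((n:ℝ)*t)
            nlinarith [abs_nonneg (Real.sin t)]
          linarith
      _ ≤ (n : ℝ) * |Real.sin t| + |Real.sin t| := by linarith
      _ = ((n : ℝ) + 1) * |Real.sin t| := by ring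

lemma aux_fejerK_nonneg (m : ℕ) (x : ℝ) : 0 ≤ fejerK m x := by
  unfold fejerK
  split
  · positivity
  · positivity

lemma aux_sin_half_ne_zero {x : ℝ} (hx : ¬ ∃ k : ℤ, x = 2 * π * k) : Real.sin (x/2) ≠ 0 := by
  intro h0
  obtain ⟨n, hn⟩ := Real.sin_eq_zero_iff.mp h0
  exact hx ⟨n, by linear_combination (-2 : ℝ) * hn⟩

lemma aux_fejerK_le (m : ℕ) (x : ℝ) : fejerK m x ≤ m + 1 := by
  unfold fejerK
  split
  · exact le_refl _
  · rename_i hx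
    have hs : Real.sin (x/2) ≠ 0 := aux_sin_half_ne_zero hx
    have hs2 : 0 < Real.sin (x/2)^2 := by positivity
    rw [div_le_iff₀ (by positivity)]
    have h1 := aux_abs_sin_nat_mul_le (m+1) (x/2)
    push_cast at h1
    have e : ((m : ℝ) + 1) * (x/2) = ((m : ℝ)+1) * x / 2 := by ring
    rw [e] at h1
    have h2 := mul_self_le_mul_self (abs_nonneg (Real.sin (((m:ℝ)+1)*x/2))) h1
    have h3 : Real.sin (((m:ℝ)+1)*x/2)^2 ≤ ((m:ℝ)+1)^2 * Real.sin (x/2)^2 := by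
      nlinarith [sq_abs (Real.sin (((m:ℝ)+1)*x/2)), sq_abs (Real.sin (x/2))]
    nlinarith

lemma aux_fejerK_decay (m : ℕ) {x : ℝ} (h0 : x ≠ 0) (hx : |x| ≤ π) :
    fejerK m x ≤ π^2 / (((m : ℝ)+1) * x^2) := by
  have hπ : (0:ℝ) < π := Real.pi_pos
  have hnb : ¬ ∃ k : ℤ, x = 2 * π * k := by
    rintro ⟨k, hk⟩
    have hk0 : k ≠ 0 := by
      intro h; rw [h] at hk; simp at hk; exact h0 hk
    have : (1:ℝ) ≤ |(k:ℝ)| := by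
      have : (1:ℤ) ≤ |k| := Int.one_le_abs hk0
      exact_mod_cast this
    have : 2 * π ≤ |x| := by
      rw [hk, abs_mul, abs_of_pos (by positivity : (0:ℝ) < 2*π)]
      nlinarith
    linarith
  unfold fejerK
  rw [if_neg hnb]
  have hsin : x^2/π^2 ≤ Real.sin (x/2)^2 := by
    have hj : 2/π * (|x|/2) ≤ Real.sin (|x|/2) :=
      Real.mul_le_sin (by positivity) (by linarith [abs_nonneg x])
    have he : Real.sin (|x|/2)^2 = Real.sin (x/2)^2 := by
      rcases abs_cases x with ⟨h,_⟩ | ⟨h,_⟩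
      · rw [h]
      · rw [h]
        have : -x/2 = -(x/2) := by ring
        rw [this, Real.sin_neg]; ring
    have h2 : (2/π * (|x|/2))^2 ≤ Real.sin (|x|/2)^2 := by
      have hnn : 0 ≤ 2/π * (|x|/2) := by positivity
      nlinarith
    rw [he] at h2
    have heq : (2/π * (|x|/2))^2 = x^2/π^2 := by
      have e : 2/π * (|x|/2) = |x|/π := by ring
      rw [e, div_pow, sq_abs]
    linarith [heq ▸ h2]
  have hx2 : 0 < x^2 := by positivity
  have hs2 : 0 < Real.sin (x/2)^2 := by
    have : 0 < x^2/π^2 := by positivity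
    linarith
  rw [div_le_div_iff₀ (by positivity) (by positivity)]
  have hs1 : Real.sin (((m:ℝ)+1)*x/2)^2 ≤ 1 := Real.sin_sq_le_one _
  have hm : (0:ℝ) < (m:ℝ)+1 := by positivity
  have h4 : x^2 ≤ π^2 * Real.sin (x/2)^2 := by
    rw [div_le_iff₀ (by positivity : (0:ℝ) < π^2)] at hsin
    linarith
  nlinarith [mul_le_mul_of_nonneg_right hs1 (le_of_lt (mul_pos hm hx2)),
    mul_le_mul_of_nonneg_left h4 hm.le]

lemma aux_neg_one_zpow_sq (n : ℤ) : ((-1:ℝ)^n)^2 = 1 := by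
  rcases Int.even_or_odd n with he | ho
  · rw [he.neg_one_zpow]; norm_num
  · rw [ho.neg_one_zpow]; norm_num

lemma aux_fejerK_period (m : ℕ) (r : ℝ) (k : ℤ) : fejerK m (2*π*k + r) = fejerK m r := by
  have hiff : (∃ j : ℤ, 2*π*(k:ℝ) + r = 2*π*j) ↔ (∃ j : ℤ, r = 2*π*j) := by
    constructor
    · rintro ⟨j, hj⟩; exact ⟨j - k, by push_cast; linarith⟩
    · rintro ⟨j, hj⟩; exact ⟨j + k, by push_cast; linarith⟩
  unfold fejerK
  by_cases hr : ∃ j : ℤ, r = 2*π*(j:ℝ)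
  · rw [if_pos (hiff.mpr hr), if_pos hr]
  · rw [if_neg (fun hc => hr (hiff.mp hc)), if_neg hr]
    have e1 : ((m:ℝ)+1)*(2*π*(k:ℝ) + r)/2 = ((m:ℝ)+1)*r/2 + (((m+1 : ℕ) : ℤ)*k : ℤ)*π := by
      push_cast; ring
    have e2 : (2*π*(k:ℝ) + r)/2 = r/2 + (k:ℝ)*π := by ring
    have e2' : (2*π*(k:ℝ) + r)/2 = r/2 + ((k:ℤ):ℝ)*π := by push_cast; ring
    rw [e1, e2', Real.sin_add_int_mul_pi, Real.sin_add_int_mul_pi, mul_pow, mul_pow,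
      aux_neg_one_zpow_sq, aux_neg_one_zpow_sq, one_mul, one_mul]

lemma aux_sum_inv_sq_le (n : ℕ) : ∑ j ∈ Finset.range n, (1:ℝ)/(((j:ℝ)+1)^2) ≤ 2 := by
  have key : ∀ n : ℕ, ∑ j ∈ Finset.range (n+1), (1:ℝ)/(((j:ℝ)+1)^2) ≤ 2 - 1/((n:ℝ)+1) := by
    intro n
    induction n with
    | zero => norm_num
    | succ n ih =>
      rw [Finset.sum_range_succ]
      have h1 : (0:ℝ) < (n:ℝ)+1 := by positivity
      have h2 : (0:ℝ) < (n:ℝ)+2 := by positivity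
      have hstep : (1:ℝ)/(((n:ℝ)+2))^2 ≤ 1/((n:ℝ)+1) - 1/((n:ℝ)+2) := by
        rw [div_sub_div _ _ (ne_of_gt h1) (ne_of_gt h2),
          div_le_div_iff₀ (by positivity) (by positivity)]
        nlinarith
      push_cast
      have e : ((n:ℝ)+1)+1 = (n:ℝ)+2 := by ring
      rw [e]
      push_cast at ih
      linarith
  cases n with
  | zero => simp
  | succ n =>
    have hk := key n
    have hpos : (0:ℝ) < 1/((n:ℝ)+1) := by positivity
    linarith

lemma aux_card_le_two_of_gap {L : ℕ} {s : Finset ℕ} (hs : ∀ a ∈ s, a < L + 1)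
    (hgap : ∀ a ∈ s, ∀ b ∈ s, a < b → L ≤ b - a) : s.card ≤ 2 := by
  by_contra hcontra
  push_neg at hcontra
  obtain ⟨a, b, c, ha, hb, hcs, hab, hac, hbc⟩ := Finset.two_lt_card_iff.mp hcontra
  have claim : ∀ p q t : ℕ, p ∈ s → q ∈ s → t ∈ s → p < q → q < t → False := by
    intro p q t hp hq ht h1 h2
    have g1 := hgap p hp q hq h1
    have g2 := hgap q hq t ht h2
    have g3 := hs t ht
    omega
  rcases lt_trichotomy a b with h1 | h1 | h1
  · rcases lt_trichotomy b c with h2 | h2 | h2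
    · exact claim a b c ha hb hcs h1 h2
    · exact hbc h2
    · rcases lt_trichotomy a c with h3 | h3 | h3
      · exact claim a c b ha hcs hb h3 h2
      · exact hac h3
      · exact claim c a b hcs ha hb h3 h1
  · exact hab h1
  · rcases lt_trichotomy b c with h2 | h2 | h2
    · rcases lt_trichotomy a c with h3 | h3 | h3
      · exact claim b a c hb ha hcs h1 h3
      · exact hac h3
      · exact claim b c a hb hcs ha h2 h3
    · exact hbc h2
    · exact claim c b a hcs hb ha h2 h1

set_option maxHeartbeats 1600000 in
/-- If `C₁ ≤ mh ≤ C₂`, then `∑_{0 ≤ l ≤ 2π/h} K_m(x − lh) ≤ C m` for a constant `C`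
depending only on `C₁, C₂`. -/
theorem stmt_15 (C₁ C₂ : ℝ) (hC₁ : 0 < C₁) (hC : C₁ ≤ C₂) :
    ∃ C > (0 : ℝ), ∀ (m : ℕ) (h : ℝ), 0 < h → C₁ ≤ m * h → m * h ≤ C₂ →
      ∀ x : ℝ, ∑ l ∈ Finset.range (Nat.floor (2 * π / h) + 1),
        fejerK m (x - l * h) ≤ C * m := by
  have hπ : (0:ℝ) < π := Real.pi_pos
  refine ⟨8 + 8 * π^2 / C₁^2, by positivity, ?_⟩
  intro m h hh hmh1 hmh2 x
  have hm1 : 1 ≤ m := by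
    rcases Nat.eq_zero_or_pos m with hm0 | hm0
    · subst hm0; simp at hmh1; linarith
    · exact hm0
  have hmR : (1:ℝ) ≤ (m:ℝ) := by exact_mod_cast hm1
  set L : ℕ := Nat.floor (2 * π / h) with hLdef
  have hLh : (L:ℝ) * h ≤ 2*π := by
    have h1 : (L:ℝ) ≤ 2*π/h := Nat.floor_le (by positivity)
    calc (L:ℝ) * h ≤ (2*π/h) * h := by nlinarith
      _ = 2*π := by field_simp
  set k : ℕ → ℤ := fun l => round ((x - l*h)/(2*π)) with hkdef
  set r : ℕ → ℝ := fun l => x - l*h - 2*π*(k l) with hrdef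
  have hdecomp : ∀ l : ℕ, x - l*h = 2*π*(k l) + r l := by
    intro l; simp only [hrdef]; ring
  have hrabs : ∀ l, |r l| ≤ π := by
    intro l
    have h1 : |(x - l*h)/(2*π) - round ((x - l*h)/(2*π))| ≤ 1/2 := abs_sub_round _
    have e : r l = 2*π * ((x - l*h)/(2*π) - round ((x - l*h)/(2*π))) := by
      simp only [hrdef, hkdef]
      field_simp
    rw [e, abs_mul, abs_of_pos (by positivity : (0:ℝ) < 2*π)]
    nlinarith
  have hfeq : ∀ l : ℕ, fejerK m (x - l*h) = fejerK m (r l) := by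
    intro l; rw [hdecomp l, aux_fejerK_period]
  set b : ℕ → ℕ := fun l => Nat.floor (|r l| / h) with hbdef
  set N : ℕ := Nat.floor (π / h) with hNdef
  have hbmem : ∀ l ∈ Finset.range (L+1), b l ∈ Finset.range (N+1) := by
    intro l _
    rw [Finset.mem_range, Nat.lt_succ_iff]
    simp only [hbdef, hNdef]
    exact Nat.floor_mono (by gcongr; exact hrabs l)
  have hlow : ∀ l, (b l : ℝ) * h ≤ |r l| := by
    intro l
    have h1 : ((b l : ℕ):ℝ) ≤ |r l|/h := by
      simp only [hbdef]
      exact Nat.floor_le (by positivity)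
    calc (b l : ℝ) * h ≤ (|r l|/h) * h := by nlinarith
      _ = |r l| := by field_simp
  have hhigh : ∀ l, |r l| < ((b l : ℝ)+1) * h := by
    intro l
    have h1 : |r l|/h < (b l : ℝ) + 1 := by
      simp only [hbdef]
      exact Nat.lt_floor_add_one _
    calc |r l| = (|r l|/h) * h := by field_simp
      _ < ((b l : ℝ)+1) * h := mul_lt_mul_of_pos_right h1 hh
  have hgap : ∀ a ∈ Finset.range (L+1), ∀ c ∈ Finset.range (L+1), a < c →
      |r a - r c| < h → L ≤ c - a := by
    intro a _ c hcr hac hclose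
    have hd : ((c:ℝ) - (a:ℝ)) * h = 2*π*(((k a):ℝ) - ((k c):ℝ)) + (r a - r c) := by
      have e1 := hdecomp a
      have e2 := hdecomp c
      linarith [e1, e2]
    have habs := abs_lt.mp hclose
    have hca1 : (1:ℝ) ≤ (c:ℝ) - (a:ℝ) := by
      have : ((a:ℝ)) + 1 ≤ (c:ℝ) := by exact_mod_cast Nat.succ_le_of_lt hac
      linarith
    have hmul : h ≤ ((c:ℝ)-(a:ℝ))*h := by nlinarith
    have hkpos : (1:ℤ) ≤ k a - k c := by
      by_contra hle
      push_neg at hle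
      have h0 : k a - k c ≤ 0 := by omega
      have h0' : ((k a:ℝ) - (k c:ℝ)) ≤ 0 := by exact_mod_cast h0
      have h2 : 2*π*((k a:ℝ)-(k c:ℝ)) ≤ 0 :=
        mul_nonpos_of_nonneg_of_nonpos (by positivity) h0'
      linarith [habs.2]
    have hk' : (1:ℝ) ≤ (k a:ℝ) - (k c:ℝ) := by exact_mod_cast hkpos
    have h2πΔ : 2*π ≤ 2*π*((k a:ℝ)-(k c:ℝ)) := by nlinarith
    have hstep : (L:ℝ)*h - h < ((c:ℝ)-(a:ℝ))*h := by linarith [habs.1]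
    have hfin : (L:ℝ) - 1 < (c:ℝ) - (a:ℝ) := by nlinarith
    have hcast : ((c - a : ℕ) : ℝ) = (c:ℝ) - (a:ℝ) := by
      push_cast [Nat.cast_sub (le_of_lt hac)]
      ring
    have : (L:ℝ) < ((c - a : ℕ):ℝ) + 1 := by rw [hcast]; linarith
    have hfin2 : L < (c - a) + 1 := by exact_mod_cast this
    omega
  have hcard : ∀ j : ℕ,
      (Finset.filter (fun l => b l = j) (Finset.range (L+1))).card ≤ 4 := by
    intro j
    set s := Finset.filter (fun l => b l = j) (Finset.range (L+1)) with hsdef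
    have hsmem : ∀ l ∈ s, l ∈ Finset.range (L+1) :=
      fun l hl => (Finset.mem_filter.mp hl).1
    have hbs : ∀ l ∈ s, b l = j := fun l hl => (Finset.mem_filter.mp hl).2
    have key : ∀ (t : Finset ℕ), (∀ l ∈ t, l ∈ s) →
        (∀ a ∈ t, ∀ c ∈ t, a < c → |r a - r c| < h) → t.card ≤ 2 := by
      intro t hts hP
      apply aux_card_le_two_of_gap (L := L)
      · intro a ha
        exact Finset.mem_range.mp (hsmem a (hts a ha))
      · intro a ha c hc hac
        exact hgap a (hsmem a (hts a ha)) c (hsmem c (hts c hc)) hac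
          (hP a ha c hc hac)
    have close_pos : ∀ a ∈ s, ∀ c ∈ s, (0 ≤ r a) → (0 ≤ r c) → |r a - r c| < h := by
      intro a ha c hc hpa hpc
      have hba := hbs a ha
      have hbc := hbs c hc
      have l1 : (j:ℝ)*h ≤ r a := by
        have := hlow a; rw [hba, abs_of_nonneg hpa] at this; exact this
      have u1 : r a < ((j:ℝ)+1)*h := by
        have := hhigh a; rwa [hba, abs_of_nonneg hpa] at this
      have l2 : (j:ℝ)*h ≤ r c := by
        have := hlow c; rw [hbc, abs_of_nonneg hpc] at this; exact this
      have u2 : r c < ((j:ℝ)+1)*h := by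
        have := hhigh c; rwa [hbc, abs_of_nonneg hpc] at this
      rw [abs_sub_lt_iff]
      constructor <;> nlinarith
    have close_neg : ∀ a ∈ s, ∀ c ∈ s, ¬(0 ≤ r a) → ¬(0 ≤ r c) → |r a - r c| < h := by
      intro a ha c hc hpa hpc
      push_neg at hpa hpc
      have hba := hbs a ha
      have hbc := hbs c hc
      have l1 : (j:ℝ)*h ≤ -(r a) := by
        have := hlow a; rw [hba, abs_of_neg hpa] at this; exact this
      have u1 : -(r a) < ((j:ℝ)+1)*h := by
        have := hhigh a; rwa [hba, abs_of_neg hpa] at this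
      have l2 : (j:ℝ)*h ≤ -(r c) := by
        have := hlow c; rw [hbc, abs_of_neg hpc] at this; exact this
      have u2 : -(r c) < ((j:ℝ)+1)*h := by
        have := hhigh c; rwa [hbc, abs_of_neg hpc] at this
      rw [abs_sub_lt_iff]
      constructor <;> nlinarith
    have c1 : (Finset.filter (fun l => 0 ≤ r l) s).card ≤ 2 := by
      apply key _ (fun l hl => (Finset.mem_filter.mp hl).1)
      intro a ha c hc _
      exact close_pos a (Finset.mem_filter.mp ha).1 c (Finset.mem_filter.mp hc).1
        (Finset.mem_filter.mp ha).2 (Finset.mem_filter.mp hc).2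
    have c2 : (Finset.filter (fun l => ¬ 0 ≤ r l) s).card ≤ 2 := by
      apply key _ (fun l hl => (Finset.mem_filter.mp hl).1)
      intro a ha c hc _
      exact close_neg a (Finset.mem_filter.mp ha).1 c (Finset.mem_filter.mp hc).1
        (Finset.mem_filter.mp ha).2 (Finset.mem_filter.mp hc).2
    have hsplit := Finset.card_filter_add_card_filter_not
      (s := s) (p := fun l => 0 ≤ r l)
    omega
  set B : ℕ → ℝ := fun j =>
    if j = 0 then ((m:ℝ)+1) else π^2/(((m:ℝ)+1)*h^2*(j:ℝ)^2) with hBdef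
  have hterm : ∀ j : ℕ, ∀ l : ℕ, b l = j → fejerK m (r l) ≤ B j := by
    intro j l hbl
    by_cases hj : j = 0
    · simp only [hBdef, if_pos hj]
      exact aux_fejerK_le m (r l)
    · simp only [hBdef, if_neg hj]
      have hj1 : 1 ≤ j := Nat.one_le_iff_ne_zero.mpr hj
      have hjR : (1:ℝ) ≤ (j:ℝ) := by exact_mod_cast hj1
      have hlo : (j:ℝ)*h ≤ |r l| := by
        have := hlow l; rwa [hbl] at this
      have hne : r l ≠ 0 := by
        intro h0
        rw [h0] at hlo
        simp at hlo
        nlinarith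
      have hd := aux_fejerK_decay m hne (hrabs l)
      refine le_trans hd ?_
      have hsq : (j:ℝ)^2*h^2 ≤ (r l)^2 := by
        have h2 := mul_self_le_mul_self (by positivity : (0:ℝ) ≤ (j:ℝ)*h) hlo
        nlinarith [sq_abs (r l)]
      have hr2 : 0 < (r l)^2 := by
        nlinarith [hsq, mul_pos (lt_of_lt_of_le zero_lt_one hjR) hh]
      rw [div_le_div_iff₀ (mul_pos (by positivity : (0:ℝ) < (m:ℝ)+1) hr2) (by positivity)]
      nlinarith [mul_le_mul_of_nonneg_left hsq
        (by positivity : (0:ℝ) ≤ π^2*((m:ℝ)+1))]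
  have hBnonneg : ∀ j, 0 ≤ B j := by
    intro j
    simp only [hBdef]
    split <;> positivity
  calc ∑ l ∈ Finset.range (L+1), fejerK m (x - l*h)
      = ∑ l ∈ Finset.range (L+1), fejerK m (r l) :=
        Finset.sum_congr rfl (fun l _ => hfeq l)
    _ = ∑ j ∈ Finset.range (N+1),
          ∑ l ∈ Finset.filter (fun l => b l = j) (Finset.range (L+1)), fejerK m (r l) :=
        (Finset.sum_fiberwise_of_maps_to hbmem _).symm
    _ ≤ ∑ j ∈ Finset.range (N+1), 4 * B j := by
        apply Finset.sum_le_sum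
        intro j _
        calc ∑ l ∈ Finset.filter (fun l => b l = j) (Finset.range (L+1)), fejerK m (r l)
            ≤ ∑ l ∈ Finset.filter (fun l => b l = j) (Finset.range (L+1)), B j :=
              Finset.sum_le_sum (fun l hl => hterm j l (Finset.mem_filter.mp hl).2)
          _ = ((Finset.filter (fun l => b l = j) (Finset.range (L+1))).card : ℝ) * B j := by
              rw [Finset.sum_const, nsmul_eq_mul]
          _ ≤ 4 * B j := by
              have h4 : ((Finset.filter (fun l => b l = j) (Finset.range (L+1))).card : ℝ) ≤ 4 := by
                exact_mod_cast hcard j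
              exact mul_le_mul_of_nonneg_right h4 (hBnonneg j)
    _ = (∑ j ∈ Finset.range N, 4 * B (j+1)) + 4 * B 0 := Finset.sum_range_succ' _ N
    _ ≤ (∑ j ∈ Finset.range N,
          4 * (π^2/(((m:ℝ)+1)*h^2)) * (1/(((j:ℝ)+1)^2))) + 4*((m:ℝ)+1) := by
        apply add_le_add
        · apply Finset.sum_le_sum
          intro j _
          apply le_of_eq
          simp only [hBdef, if_neg (Nat.succ_ne_zero j)]
          push_cast
          have h1 : ((m:ℝ)+1) ≠ 0 := by positivity
          have h2 : h ≠ 0 := ne_of_gt hh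
          have h3 : ((j:ℝ)+1) ≠ 0 := by positivity
          field_simp
        · simp only [hBdef, if_pos rfl]
          norm_num
    _ = 4 * (π^2/(((m:ℝ)+1)*h^2)) * (∑ j ∈ Finset.range N, 1/(((j:ℝ)+1)^2))
          + 4*((m:ℝ)+1) := by rw [Finset.mul_sum]
    _ ≤ 4 * (π^2/(((m:ℝ)+1)*h^2)) * 2 + 4*((m:ℝ)+1) := by
        have hsum := aux_sum_inv_sq_le N
        have hfac : (0:ℝ) ≤ 4 * (π^2/(((m:ℝ)+1)*h^2)) := by positivity
        nlinarith
    _ ≤ (8 + 8 * π^2 / C₁^2) * m := by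
        have key : C₁^2 ≤ (m:ℝ)*(((m:ℝ)+1)*h^2) := by
          nlinarith [mul_self_le_mul_self hC₁.le hmh1,
            mul_nonneg (le_trans zero_le_one hmR) (sq_nonneg h)]
        have hdiv : 8 * (π^2/(((m:ℝ)+1)*h^2)) ≤ 8 * π^2 / C₁^2 * m := by
          have hD : (0:ℝ) < ((m:ℝ)+1)*h^2 := by positivity
          have hC2 : (0:ℝ) < C₁^2 := by positivity
          rw [show 8*(π^2/(((m:ℝ)+1)*h^2)) = 8*π^2/(((m:ℝ)+1)*h^2) by ring,
            div_le_iff₀ hD,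
            show 8*π^2/C₁^2*(m:ℝ)*(((m:ℝ)+1)*h^2)
              = 8*π^2 * ((m:ℝ)*(((m:ℝ)+1)*h^2))/C₁^2 by ring,
            le_div_iff₀ hC2]
          nlinarith [mul_le_mul_of_nonneg_left key (by positivity : (0:ℝ) ≤ 8*π^2)]
        nlinarith [hdiv, hmR]
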